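/- Fix ε > 0, finite I, J, μ a strictly positive probability vector on I, and c ∈ ℝ^{I×J}. For each probability vector ν on J with ν_j > 0 for all j, the regularized transport problem MK_ε(ν) = inf over γ ∈ Π(μ,ν) of Σ_{ij} c_{ij} γ_{ij} + ε Σ_{ij} γ_{ij}(ln γ_{ij} − 1) has a unique minimizer, and the map ν ↦ MK_ε(ν) is strictly convex on the interior of the simplex. -/

import Mathlib

open Finset

private lemma entf_strictConvex :
    StrictConvexOn ℝ (Set.Ici 0) (fun x : ℝ => x * (Real.log x - 1)) := by
  have hneg : ConvexOn ℝ (Set.Ici (0:ℝ)) (fun x : ℝ => -x) := by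
    refine ⟨convex_Ici 0, ?_⟩
    intro x _ y _ a b _ _ _
    exact le_of_eq (by simp [smul_eq_mul]; ring)
  have h := Real.strictConvexOn_mul_log.add_convexOn hneg
  exact h.congr (fun x _ => by simp [Pi.add_apply]; ring)

theorem entropic_MK_unique_and_strictly_convex
    {I J : Type*} [Fintype I] [Fintype J]
    (ε : ℝ) (hε : 0 < ε)
    (μ : I → ℝ) (hμ0 : ∀ i, 0 < μ i) (hμ1 : ∑ i, μ i = 1)
    (c : I → J → ℝ)
    (Plan : (J → ℝ) → Set (I → J → ℝ))
    (hPlan : ∀ ν, Plan ν =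
      {γ | (∀ i j, 0 ≤ γ i j) ∧ (∀ i, ∑ j, γ i j = μ i) ∧ (∀ j, ∑ i, γ i j = ν j)})
    (obj : (I → J → ℝ) → ℝ)
    (hobj : ∀ γ, obj γ = ∑ i, ∑ j, c i j * γ i j
      + ε * ∑ i, ∑ j, γ i j * (Real.log (γ i j) - 1))
    (MKε : (J → ℝ) → ℝ)
    (hMKε : ∀ ν, MKε ν = sInf (obj '' Plan ν)) :
    (∀ ν : J → ℝ, (∀ j, 0 < ν j) → ∑ j, ν j = 1 →
      ∃! γ : I → J → ℝ, γ ∈ Plan ν ∧ ∀ γ' ∈ Plan ν, obj γ ≤ obj γ') ∧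
    StrictConvexOn ℝ {ν : J → ℝ | (∀ j, 0 < ν j) ∧ ∑ j, ν j = 1} MKε := by
  classical
  set f : ℝ → ℝ := fun x => x * (Real.log x - 1) with hf_def
  have hf := entf_strictConvex
  -- the nonnegative orthant
  set S : Set (I → J → ℝ) := {γ | ∀ i j, 0 ≤ γ i j} with hS_def
  have hSconv : Convex ℝ S := by
    intro x hx y hy a b ha hb hab i j
    have := hx i j; have := hy i j
    simp only [Pi.add_apply, Pi.smul_apply, smul_eq_mul]
    positivity
  -- strict convexity of obj on S
  have hObj : StrictConvexOn ℝ S obj := by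
    refine ⟨hSconv, ?_⟩
    intro x hx y hy hxy a b ha hb hab
    have hx' : ∀ i j, x i j ∈ Set.Ici (0:ℝ) := fun i j => hx i j
    have hy' : ∀ i j, y i j ∈ Set.Ici (0:ℝ) := fun i j => hy i j
    obtain ⟨i₀, j₀, hij⟩ : ∃ i j, x i j ≠ y i j := by
      by_contra h
      push_neg at h
      exact hxy (funext fun i => funext fun j => h i j)
    have hle : ∀ i j, f (a * x i j + b * y i j) ≤ a * f (x i j) + b * f (y i j) := by
      intro i j
      have := hf.convexOn.2 (hx' i j) (hy' i j) ha.le hb.le hab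
      simpa [smul_eq_mul] using this
    have hlt : f (a * x i₀ j₀ + b * y i₀ j₀) < a * f (x i₀ j₀) + b * f (y i₀ j₀) := by
      have := hf.2 (hx' i₀ j₀) (hy' i₀ j₀) hij ha hb hab
      simpa [smul_eq_mul] using this
    have hE : (∑ i, ∑ j, f (a * x i j + b * y i j)) <
        a * (∑ i, ∑ j, f (x i j)) + b * (∑ i, ∑ j, f (y i j)) := by
      have : (∑ i, ∑ j, f (a * x i j + b * y i j)) <
          ∑ i, ∑ j, (a * f (x i j) + b * f (y i j)) := by
        refine Finset.sum_lt_sum (fun i _ => Finset.sum_le_sum fun j _ => hle i j) ?_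
        exact ⟨i₀, Finset.mem_univ _,
          Finset.sum_lt_sum (fun j _ => hle i₀ j) ⟨j₀, Finset.mem_univ _, hlt⟩⟩
      calc (∑ i, ∑ j, f (a * x i j + b * y i j))
          < ∑ i, ∑ j, (a * f (x i j) + b * f (y i j)) := this
        _ = a * (∑ i, ∑ j, f (x i j)) + b * (∑ i, ∑ j, f (y i j)) := by
            simp [Finset.sum_add_distrib, Finset.mul_sum]
    have hL : (∑ i, ∑ j, c i j * (a * x i j + b * y i j)) =
        a * (∑ i, ∑ j, c i j * x i j) + b * (∑ i, ∑ j, c i j * y i j) := by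
      simp only [Finset.mul_sum, ← Finset.sum_add_distrib]
      exact Finset.sum_congr rfl fun i _ => Finset.sum_congr rfl fun j _ => by ring
    have hcombo : ∀ i j, (a • x + b • y) i j = a * x i j + b * y i j := by
      intro i j; simp [smul_eq_mul]
    rw [hobj, hobj, hobj]
    simp only [hcombo, smul_eq_mul]
    have := mul_lt_mul_of_pos_left hE hε
    calc (∑ i, ∑ j, c i j * (a * x i j + b * y i j))
          + ε * ∑ i, ∑ j, f (a * x i j + b * y i j)
        < (a * (∑ i, ∑ j, c i j * x i j) + b * (∑ i, ∑ j, c i j * y i j))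
          + ε * (a * (∑ i, ∑ j, f (x i j)) + b * (∑ i, ∑ j, f (y i j))) := by
          rw [hL]; exact add_lt_add_of_le_of_lt le_rfl this
      _ = a * ((∑ i, ∑ j, c i j * x i j) + ε * ∑ i, ∑ j, f (x i j))
          + b * ((∑ i, ∑ j, c i j * y i j) + ε * ∑ i, ∑ j, f (y i j)) := by ring
  -- mixing of plans
  have hmix : ∀ (ν₁ ν₂ : J → ℝ) (x y : I → J → ℝ) (a b : ℝ), 0 ≤ a → 0 ≤ b → a + b = 1 →
      x ∈ Plan ν₁ → y ∈ Plan ν₂ → a • x + b • y ∈ Plan (fun j => a * ν₁ j + b * ν₂ j) := by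
    intro ν₁ ν₂ x y a b ha hb hab hx hy
    rw [hPlan] at hx hy ⊢
    obtain ⟨hx0, hxr, hxc⟩ := hx
    obtain ⟨hy0, hyr, hyc⟩ := hy
    refine ⟨?_, ?_, ?_⟩
    · intro i j
      have := hx0 i j; have := hy0 i j
      simp only [Pi.add_apply, Pi.smul_apply, smul_eq_mul]
      positivity
    · intro i
      simp only [Pi.add_apply, Pi.smul_apply, smul_eq_mul]
      rw [Finset.sum_add_distrib, ← Finset.mul_sum, ← Finset.mul_sum, hxr i, hyr i]
      nlinarith [hμ0 i]
    · intro j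
      simp only [Pi.add_apply, Pi.smul_apply, smul_eq_mul]
      rw [Finset.sum_add_distrib, ← Finset.mul_sum, ← Finset.mul_sum, hxc j, hyc j]
  have hPlanS : ∀ ν, Plan ν ⊆ S := by
    intro ν γ hγ
    rw [hPlan] at hγ
    exact hγ.1
  -- continuity of obj
  have hfc : Continuous f := by
    have : Continuous fun x : ℝ => x * Real.log x - x :=
      Real.continuous_mul_log.sub continuous_id
    exact this.congr fun x => by simp [hf_def]; ring
  have happ : ∀ i j, Continuous fun γ : I → J → ℝ => γ i j := fun i j =>
    (continuous_apply j).comp (continuous_apply i)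
  have hcont : Continuous obj := by
    have : Continuous fun γ : I → J → ℝ => ∑ i, ∑ j, c i j * γ i j
        + ε * ∑ i, ∑ j, γ i j * (Real.log (γ i j) - 1) := by
      refine Continuous.add ?_ (continuous_const.mul ?_)
      · exact continuous_finset_sum _ fun i _ => continuous_finset_sum _ fun j _ =>
          continuous_const.mul (happ i j)
      · exact continuous_finset_sum _ fun i _ => continuous_finset_sum _ fun j _ =>
          hfc.comp (happ i j)
    exact this.congr fun γ => (hobj γ).symm
  -- existence of minimizers for valid ν
  have hmin_ex : ∀ ν : J → ℝ, (∀ j, 0 < ν j) → ∑ j, ν j = 1 →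
      ∃ γ ∈ Plan ν, ∀ γ' ∈ Plan ν, obj γ ≤ obj γ' := by
    intro ν hν0 hν1
    have hne : (Plan ν).Nonempty := by
      refine ⟨fun i j => μ i * ν j, ?_⟩
      rw [hPlan]
      refine ⟨fun i j => le_of_lt (mul_pos (hμ0 i) (hν0 j)), fun i => ?_, fun j => ?_⟩
      · rw [← Finset.mul_sum, hν1, mul_one]
      · rw [← Finset.sum_mul, hμ1, one_mul]
    have hclosed : IsClosed (Plan ν) := by
      rw [hPlan]
      have h1 : IsClosed {γ : I → J → ℝ | ∀ i j, 0 ≤ γ i j} := by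
        have : {γ : I → J → ℝ | ∀ i j, 0 ≤ γ i j} = ⋂ i, ⋂ j, {γ | 0 ≤ γ i j} := by
          ext γ; simp
        rw [this]
        exact isClosed_iInter fun i => isClosed_iInter fun j =>
          isClosed_le continuous_const (happ i j)
      have h2 : IsClosed {γ : I → J → ℝ | ∀ i, ∑ j, γ i j = μ i} := by
        have : {γ : I → J → ℝ | ∀ i, ∑ j, γ i j = μ i} = ⋂ i, {γ | ∑ j, γ i j = μ i} := by
          ext γ; simp
        rw [this]
        exact isClosed_iInter fun i =>
          isClosed_eq (continuous_finset_sum _ fun j _ => happ i j) continuous_const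
      have h3 : IsClosed {γ : I → J → ℝ | ∀ j, ∑ i, γ i j = ν j} := by
        have : {γ : I → J → ℝ | ∀ j, ∑ i, γ i j = ν j} = ⋂ j, {γ | ∑ i, γ i j = ν j} := by
          ext γ; simp
        rw [this]
        exact isClosed_iInter fun j =>
          isClosed_eq (continuous_finset_sum _ fun i _ => happ i j) continuous_const
      have : {γ : I → J → ℝ |
          (∀ i j, 0 ≤ γ i j) ∧ (∀ i, ∑ j, γ i j = μ i) ∧ (∀ j, ∑ i, γ i j = ν j)} =
          {γ : I → J → ℝ | ∀ i j, 0 ≤ γ i j} ∩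
            ({γ | ∀ i, ∑ j, γ i j = μ i} ∩ {γ | ∀ j, ∑ i, γ i j = ν j}) := by
        ext γ; simp [Set.mem_inter_iff, and_assoc]
      rw [this]
      exact h1.inter (h2.inter h3)
    have hcpt : IsCompact (Plan ν) := by
      refine IsCompact.of_isClosed_subset
        (isCompact_univ_pi fun _ : I => isCompact_univ_pi fun _ : J => isCompact_Icc
          (a := (0:ℝ)) (b := 1)) hclosed ?_
      intro γ hγ
      rw [hPlan] at hγ
      obtain ⟨h0, hr, _⟩ := hγ
      intro i _
      intro j _
      refine ⟨h0 i j, ?_⟩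
      have h1 : γ i j ≤ ∑ j', γ i j' :=
        Finset.single_le_sum (fun j' _ => h0 i j') (Finset.mem_univ j)
      have h2 : μ i ≤ ∑ i', μ i' :=
        Finset.single_le_sum (fun i' _ => (hμ0 i').le) (Finset.mem_univ i)
      rw [hr i] at h1
      rw [hμ1] at h2
      linarith
    obtain ⟨γ, hγ, hmin⟩ := hcpt.exists_isMinOn hne hcont.continuousOn
    exact ⟨γ, hγ, fun γ' hγ' => hmin hγ'⟩
  -- uniqueness
  have huniq : ∀ ν : J → ℝ, ∀ γ₁ γ₂ : I → J → ℝ,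
      γ₁ ∈ Plan ν → (∀ γ' ∈ Plan ν, obj γ₁ ≤ obj γ') →
      γ₂ ∈ Plan ν → (∀ γ' ∈ Plan ν, obj γ₂ ≤ obj γ') → γ₁ = γ₂ := by
    intro ν γ₁ γ₂ h₁ hm₁ h₂ hm₂
    by_contra hne
    have hmem : (1/2 : ℝ) • γ₁ + (1/2 : ℝ) • γ₂ ∈ Plan ν := by
      have := hmix ν ν γ₁ γ₂ (1/2) (1/2) (by norm_num) (by norm_num) (by norm_num) h₁ h₂
      have heq : (fun j => (1/2 : ℝ) * ν j + (1/2 : ℝ) * ν j) = ν := by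
        funext j; ring
      rwa [heq] at this
    have hlt := hObj.2 (hPlanS ν h₁) (hPlanS ν h₂) hne
      (by norm_num : (0:ℝ) < 1/2) (by norm_num : (0:ℝ) < 1/2) (by norm_num)
    have heq12 : obj γ₁ = obj γ₂ := le_antisymm (hm₁ γ₂ h₂) (hm₂ γ₁ h₁)
    have h1 := hm₁ _ hmem
    simp only [smul_eq_mul] at hlt
    nlinarith [hlt, h1]
  refine ⟨?_, ?_⟩
  · intro ν hν0 hν1
    obtain ⟨γ, hγ, hmin⟩ := hmin_ex ν hν0 hν1
    exact ⟨γ, ⟨hγ, hmin⟩, fun γ' ⟨hγ', hmin'⟩ => huniq ν γ' γ hγ' hmin' hγ hmin⟩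
  · -- strict convexity of MKε
    have hval : ∀ (ν : J → ℝ) (γ : I → J → ℝ), γ ∈ Plan ν →
        (∀ γ' ∈ Plan ν, obj γ ≤ obj γ') → MKε ν = obj γ := by
      intro ν γ hγ hmin
      rw [hMKε]
      exact IsLeast.csInf_eq ⟨⟨γ, hγ, rfl⟩, by rintro _ ⟨γ', hγ', rfl⟩; exact hmin γ' hγ'⟩
    constructor
    · -- convexity of the open simplex
      intro ν₁ h₁ ν₂ h₂ a b ha hb hab
      refine ⟨fun j => ?_, ?_⟩
      · rcases eq_or_lt_of_le ha with h | h
        · simp only [Pi.add_apply, Pi.smul_apply, smul_eq_mul, ← h]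
          have hb1 : b = 1 := by linarith
          simpa [hb1] using h₂.1 j
        · have := h₁.1 j; have := h₂.1 j
          simp only [Pi.add_apply, Pi.smul_apply, smul_eq_mul]
          nlinarith
      · simp only [Pi.add_apply, Pi.smul_apply, smul_eq_mul]
        rw [Finset.sum_add_distrib, ← Finset.mul_sum, ← Finset.mul_sum, h₁.2, h₂.2]
        linarith
    · intro ν₁ h₁ ν₂ h₂ hne a b ha hb hab
      obtain ⟨hν₁0, hν₁1⟩ := h₁
      obtain ⟨hν₂0, hν₂1⟩ := h₂
      set νm : J → ℝ := a • ν₁ + b • ν₂ with hνm_def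
      have hνm0 : ∀ j, 0 < νm j := by
        intro j
        have := hν₁0 j; have := hν₂0 j
        simp only [hνm_def, Pi.add_apply, Pi.smul_apply, smul_eq_mul]
        positivity
      have hνm1 : ∑ j, νm j = 1 := by
        simp only [hνm_def, Pi.add_apply, Pi.smul_apply, smul_eq_mul]
        rw [Finset.sum_add_distrib, ← Finset.mul_sum, ← Finset.mul_sum, hν₁1, hν₂1]
        linarith
      obtain ⟨γ₁, hγ₁, hmin₁⟩ := hmin_ex ν₁ hν₁0 hν₁1
      obtain ⟨γ₂, hγ₂, hmin₂⟩ := hmin_ex ν₂ hν₂0 hν₂1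
      obtain ⟨γm, hγm, hminm⟩ := hmin_ex νm hνm0 hνm1
      have hγne : γ₁ ≠ γ₂ := by
        intro h
        apply hne
        funext j
        have hc₁ : ∑ i, γ₁ i j = ν₁ j := by
          have := hγ₁; rw [hPlan] at this; exact this.2.2 j
        have hc₂ : ∑ i, γ₂ i j = ν₂ j := by
          have := hγ₂; rw [hPlan] at this; exact this.2.2 j
        rw [← hc₁, ← hc₂, h]
      have hcombo : a • γ₁ + b • γ₂ ∈ Plan νm := by
        have := hmix ν₁ ν₂ γ₁ γ₂ a b ha.le hb.le hab hγ₁ hγ₂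
        have heq : (fun j => a * ν₁ j + b * ν₂ j) = νm := by
          funext j; simp [hνm_def, smul_eq_mul]
        rwa [heq] at this
      have hlt := hObj.2 (hPlanS ν₁ hγ₁) (hPlanS ν₂ hγ₂) hγne ha hb hab
      calc MKε (a • ν₁ + b • ν₂) = obj γm := hval νm γm hγm hminm
        _ ≤ obj (a • γ₁ + b • γ₂) := hminm _ hcombo
        _ < a • obj γ₁ + b • obj γ₂ := hlt
        _ = a • MKε ν₁ + b • MKε ν₂ := by
            rw [hval ν₁ γ₁ hγ₁ hmin₁, hval ν₂ γ₂ hγ₂ hmin₂]
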